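/- The number of LR-tableaux with outer shape β in which every entry occurs exactly once equals ∏_i (1 + β_i − β_{i+1}): in such a tableau, each entry must be the rightmost box of its row, and the number of entries placed in column i may be any value from 0 to β_i − β_{i+1} (columns counted by distinct column lengths), these choices being independent. -/

import Mathlib

/-- A (skew) Littlewood-Richardson tableau: `outer` and `inner` are the row
lengths of the outer shape `β` and the inner (empty) shape `γ`; the box in
row `r` (0-indexed from the top) and column `c` (0-indexed) belongs to the
diagram iff `c < outer r`, and it is a filled box of the skew region `β\γ` iff
moreover `inner r ≤ c`; filled boxes carry positive entries which increase
weakly along rows, strictly down columns, and which satisfy the lattice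
permutation property: weakly to the right of every column there are at least
as many entries `e` as entries `e+1`. -/
structure LRTableau where
  outer : ℕ → ℕ
  inner : ℕ → ℕ
  outer_anti : Antitone outer
  inner_anti : Antitone inner
  inner_le : ∀ r, inner r ≤ outer r
  finite : ∃ N, ∀ r, N ≤ r → outer r = 0
  entry : ℕ × ℕ → ℕ
  entry_zero : ∀ b : ℕ × ℕ, ¬(inner b.1 ≤ b.2 ∧ b.2 < outer b.1) → entry b = 0
  entry_pos : ∀ b : ℕ × ℕ, inner b.1 ≤ b.2 → b.2 < outer b.1 → 1 ≤ entry b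
  row_weak : ∀ r c c' : ℕ, inner r ≤ c → c ≤ c' → c' < outer r →
    entry (r, c) ≤ entry (r, c')
  col_strict : ∀ r r' c : ℕ, r < r' → inner r ≤ c → c < outer r →
    inner r' ≤ c → c < outer r' → entry (r, c) < entry (r', c)
  lattice : ∀ c e : ℕ, 1 ≤ e →
    Set.ncard {b : ℕ × ℕ | inner b.1 ≤ b.2 ∧ b.2 < outer b.1 ∧ c ≤ b.2 ∧
        entry b = e + 1} ≤
      Set.ncard {b : ℕ × ℕ | inner b.1 ≤ b.2 ∧ b.2 < outer b.1 ∧ c ≤ b.2 ∧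
        entry b = e}

/-- `b` is a filled box of the tableau `T`. -/
def LRTableau.Mem (T : LRTableau) (b : ℕ × ℕ) : Prop :=
  T.inner b.1 ≤ b.2 ∧ b.2 < T.outer b.1

noncomputable section
namespace LR15
open Finset

variable (nn : ℕ) (β : Fin nn → ℕ)

/-- column heights, extended by zero -/
def B (c : ℕ) : ℕ := if h : c < nn then β ⟨c, h⟩ else 0

/-- row lengths -/
def O (r : ℕ) : ℕ := (Finset.univ.filter fun i : Fin nn => r < β i).card

variable {nn β}
variable (hanti : ∀ i j : Fin nn, i ≤ j → β j ≤ β i)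

include hanti in
lemma B_anti {c c' : ℕ} (h : c ≤ c') : B nn β c' ≤ B nn β c := by
  unfold B
  split_ifs with h1 h2
  · exact hanti _ _ (by exact h)
  · omega
  · exact Nat.zero_le _
  · exact le_rfl

lemma O_le_nn (r : ℕ) : O nn β r ≤ nn := by
  have := Finset.card_filter_le (Finset.univ : Finset (Fin nn)) (fun i => r < β i)
  simpa [O] using this

lemma O_anti : Antitone (O nn β) := by
  intro r s hrs
  apply Finset.card_le_card
  intro i hi
  simp only [Finset.mem_filter, Finset.mem_univ, true_and] at *
  omega

include hanti in
lemma hOB {r c : ℕ} : c < O nn β r ↔ r < B nn β c := by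
  constructor
  · intro h
    by_contra hc
    by_cases hcn : c < nn
    · have hsub : (Finset.univ.filter fun i : Fin nn => r < β i) ⊆
          Finset.univ.filter fun i : Fin nn => (i : ℕ) < c := by
        intro i hi
        simp only [Finset.mem_filter, Finset.mem_univ, true_and] at *
        by_contra hic
        have : β i ≤ β ⟨c, hcn⟩ := hanti _ _ (by
          rw [Fin.le_def]; exact Nat.le_of_not_lt hic)
        simp only [B, dif_pos hcn] at hc
        omega
      have hcard : (Finset.univ.filter fun i : Fin nn => (i : ℕ) < c).card ≤ c := by
        have := Finset.card_le_card_of_injOn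
          (s := Finset.univ.filter fun i : Fin nn => (i : ℕ) < c)
          (t := Finset.range c) (fun i : Fin nn => (i : ℕ))
          (fun i hi => by
            simp only [Finset.mem_coe, Finset.mem_filter, Finset.mem_univ, true_and] at hi
            exact Finset.mem_range.2 hi)
          (fun i _ j _ hij => Fin.val_injective hij)
        simpa using this
      have := Finset.card_le_card hsub
      unfold O at h
      omega
    · have := O_le_nn (nn := nn) (β := β) r
      omega
  · intro h
    have hcn : c < nn := by
      by_contra hcn
      simp only [B, dif_neg hcn] at h
      omega
    have hsub : (Finset.range (c + 1)).card ≤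
        (Finset.univ.filter fun i : Fin nn => r < β i).card := by
      apply Finset.card_le_card_of_injOn (s := Finset.range (c+1))
        (t := Finset.univ.filter fun i : Fin nn => r < β i)
        (fun m => if hm : m < nn then (⟨m, hm⟩ : Fin nn) else ⟨c, hcn⟩)
      · intro m hm
        simp only [Finset.mem_coe, Finset.mem_range] at hm
        have hmn : m < nn := by omega
        beta_reduce
        rw [dif_pos hmn]
        simp only [Finset.mem_coe, Finset.mem_filter, Finset.mem_univ, true_and]
        have : β ⟨c, hcn⟩ ≤ β ⟨m, hmn⟩ := hanti _ _ (by simp; omega)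
        simp only [B, dif_pos hcn] at h
        omega
      · intro a ha b hb hab
        simp only [Finset.mem_coe, Finset.mem_range] at ha hb
        simp only [dif_pos (by omega : a < nn), dif_pos (by omega : b < nn)] at hab
        simpa using congrArg Fin.val hab
    unfold O
    simpa using hsub


section Fside
variable (nn β) in
/-- sum of F over columns ≥ c -/
def Tsum (F : ℕ → ℕ) (c : ℕ) : ℕ := ∑ j ∈ Finset.Ico c nn, F j

variable (nn β) in
def innerF (F : ℕ → ℕ) (r : ℕ) : ℕ :=
  if 0 < O nn β r ∧ B nn β (O nn β r - 1) - F (O nn β r - 1) ≤ r then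
    O nn β r - 1 else O nn β r

variable (nn β) in
def entryF (F : ℕ → ℕ) (b : ℕ × ℕ) : ℕ :=
  if innerF nn β F b.1 ≤ b.2 ∧ b.2 < O nn β b.1 then
    Tsum nn F (b.2 + 1) + (b.1 - (B nn β b.2 - F b.2)) + 1 else 0

variable {F : ℕ → ℕ}

lemma Tsum_zero (c : ℕ) (h : nn ≤ c) : Tsum nn F c = 0 := by
  unfold Tsum
  rw [Finset.Ico_eq_empty (by omega)]
  rfl

lemma Tsum_succ (c : ℕ) (h : c < nn) : Tsum nn F c = F c + Tsum nn F (c + 1) := by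
  unfold Tsum
  exact Finset.sum_eq_sum_Ico_succ_bot h F

lemma Tsum_anti {c c' : ℕ} (h : c ≤ c') : Tsum nn F c' ≤ Tsum nn F c := by
  unfold Tsum
  exact Finset.sum_le_sum_of_subset (Finset.Ico_subset_Ico h le_rfl)

lemma innerF_range (r : ℕ) :
    innerF nn β F r ≤ O nn β r ∧ O nn β r ≤ innerF nn β F r + 1 := by
  unfold innerF
  split_ifs <;> omega

variable (hF : ∀ c, F c + B nn β (c + 1) ≤ B nn β c)

include hanti hF in
lemma filled_iff {r c : ℕ} :
    (innerF nn β F r ≤ c ∧ c < O nn β r) ↔ (B nn β c - F c ≤ r ∧ r < B nn β c) := by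
  constructor
  · rintro ⟨h1, h2⟩
    have hrB : r < B nn β c := (hOB hanti).1 h2
    refine ⟨?_, hrB⟩
    have hr := innerF_range (β := β) (F := F) r
    have hin : innerF nn β F r = O nn β r - 1 ∧ c = O nn β r - 1 := by
      unfold innerF at h1 ⊢
      split_ifs at h1 ⊢ <;> omega
    have hcond : 0 < O nn β r ∧ B nn β (O nn β r - 1) - F (O nn β r - 1) ≤ r := by
      by_contra hc
      unfold innerF at hin
      rw [if_neg hc] at hin
      omega
    rw [hin.2]
    exact hcond.2
  · rintro ⟨h1, h2⟩
    have hcO : c < O nn β r := (hOB hanti).2 h2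
    have hcn : c < nn := by
      by_contra hcn
      have : B nn β c = 0 := by unfold B; rw [dif_neg hcn]
      omega
    have hBc1 : B nn β (c + 1) ≤ r := le_trans (by have := hF c; omega) h1
    have hO1 : ¬ (c + 1 < O nn β r) := by
      rw [hOB hanti]; omega
    have hOr : O nn β r = c + 1 := by omega
    refine ⟨?_, hcO⟩
    unfold innerF
    rw [if_pos (by rw [hOr]; simpa using h1)]
    omega

include hanti hF in
lemma filled_facts {r c : ℕ} (h : innerF nn β F r ≤ c ∧ c < O nn β r) :
    B nn β c - F c ≤ r ∧ r < B nn β c ∧ c < nn ∧ 1 ≤ F c ∧ F c ≤ B nn β c ∧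
      entryF nn β F (r, c) = Tsum nn F (c + 1) + (r - (B nn β c - F c)) + 1 := by
  have hf := (filled_iff hanti hF).1 h
  have hcn : c < nn := by
    by_contra hcn
    have : B nn β c = 0 := by unfold B; rw [dif_neg hcn]
    omega
  have hFB : F c ≤ B nn β c := by have := hF c; omega
  refine ⟨hf.1, hf.2, hcn, by omega, hFB, ?_⟩
  unfold entryF
  rw [if_pos h]

include hanti hF in
lemma entryF_bounds {r c : ℕ} (h : innerF nn β F r ≤ c ∧ c < O nn β r) :
    Tsum nn F (c + 1) < entryF nn β F (r, c) ∧ entryF nn β F (r, c) ≤ Tsum nn F c := by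
  obtain ⟨h1, h2, hcn, hF1, hFB, he⟩ := filled_facts hanti hF h
  rw [he, Tsum_succ c hcn]
  omega

include hanti hF in
lemma entryF_inj {b b' : ℕ × ℕ} (h : innerF nn β F b.1 ≤ b.2 ∧ b.2 < O nn β b.1)
    (h' : innerF nn β F b'.1 ≤ b'.2 ∧ b'.2 < O nn β b'.1)
    (he : entryF nn β F b = entryF nn β F b') : b = b' := by
  obtain ⟨r, c⟩ := b
  obtain ⟨r', c'⟩ := b'
  have hb := entryF_bounds hanti hF (r := r) (c := c) h
  have hb' := entryF_bounds hanti hF (r := r') (c := c') h'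
  have hcc : c = c' := by
    rcases lt_trichotomy c c' with hlt | heq | hlt
    · have : Tsum nn F c' ≤ Tsum nn F (c + 1) := Tsum_anti (by omega)
      omega
    · exact heq
    · have : Tsum nn F c ≤ Tsum nn F (c' + 1) := Tsum_anti (by omega)
      omega
  subst hcc
  have e1 := (filled_facts hanti hF (r := r) (c := c) h).2.2.2.2.2
  have e2 := (filled_facts hanti hF (r := r') (c := c) h').2.2.2.2.2
  have f1 := (filled_facts hanti hF (r := r) (c := c) h).1
  have f2 := (filled_facts hanti hF (r := r') (c := c) h').1
  simp only [Prod.mk.injEq]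
  rw [e1, e2] at he
  exact ⟨by omega, trivial⟩

include hanti hF in
lemma entryF_surj_aux : ∀ d c v, nn - c ≤ d → 1 ≤ v → v ≤ Tsum nn F c →
    ∃ b : ℕ × ℕ, (innerF nn β F b.1 ≤ b.2 ∧ b.2 < O nn β b.1) ∧ entryF nn β F b = v := by
  intro d
  induction d with
  | zero =>
    intro c v hd hv hvT
    have : Tsum nn F c = 0 := Tsum_zero c (by omega)
    omega
  | succ d ih =>
    intro c v hd hv hvT
    have hcn : c < nn := by
      by_contra hcn
      have : Tsum nn F c = 0 := Tsum_zero c (by omega)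
      omega
    by_cases hrec : v ≤ Tsum nn F (c + 1)
    · exact ih (c + 1) v (by omega) hv hrec
    · have hts := Tsum_succ (F := F) c hcn
      have hFB : F c ≤ B nn β c := by have := hF c; omega
      set r := B nn β c - F c + (v - Tsum nn F (c + 1) - 1) with hr
      have h1 : B nn β c - F c ≤ r := by omega
      have h2 : r < B nn β c := by omega
      have hfill : innerF nn β F r ≤ c ∧ c < O nn β r :=
        (filled_iff hanti hF).2 ⟨h1, h2⟩
      refine ⟨(r, c), hfill, ?_⟩
      have he := (filled_facts hanti hF hfill).2.2.2.2.2
      rw [he]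
      omega

include hanti hF in
lemma entryF_surj {v : ℕ} (hv : 1 ≤ v) (hvT : v ≤ Tsum nn F 0) :
    ∃ b : ℕ × ℕ, (innerF nn β F b.1 ≤ b.2 ∧ b.2 < O nn β b.1) ∧ entryF nn β F b = v :=
  entryF_surj_aux hanti hF nn 0 v (by omega) hv hvT

include hanti hF in
lemma entryF_colanti {b b' : ℕ × ℕ} (h : innerF nn β F b.1 ≤ b.2 ∧ b.2 < O nn β b.1)
    (h' : innerF nn β F b'.1 ≤ b'.2 ∧ b'.2 < O nn β b'.1)
    (he : entryF nn β F b ≤ entryF nn β F b') : b'.2 ≤ b.2 := by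
  by_contra hc
  have hb := entryF_bounds hanti hF (r := b.1) (c := b.2) (by simpa using h)
  have hb' := entryF_bounds hanti hF (r := b'.1) (c := b'.2) (by simpa using h')
  have : Tsum nn F b'.2 ≤ Tsum nn F (b.2 + 1) := Tsum_anti (by omega)
  simp only [Prod.mk.eta] at hb hb'
  omega

lemma innerF_anti : Antitone (innerF nn β F) := by
  intro r s hrs
  have hOs : O nn β s ≤ O nn β r := O_anti hrs
  unfold innerF
  split_ifs with h1 h2 h2
  · omega
  · omega
  · by_cases he : O nn β s = O nn β r
    · exfalso; apply h1; rw [he]; exact ⟨h2.1, le_trans h2.2 hrs⟩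
    · omega
  · omega

end Fside

lemma filled_col {F : ℕ → ℕ} {r c : ℕ} (h : innerF nn β F r ≤ c ∧ c < O nn β r) :
    c + 1 = O nn β r := by
  have := innerF_range (β := β) (F := F) r
  omega

/-- The tableau associated to a choice of `F`. -/
def TabF (nn : ℕ) (β : Fin nn → ℕ) (hanti : ∀ i j : Fin nn, i ≤ j → β j ≤ β i)
    (F : ℕ → ℕ) (hF : ∀ c, F c + B nn β (c + 1) ≤ B nn β c) : LRTableau where
  outer := O nn β
  inner := innerF nn β F
  outer_anti := O_anti
  inner_anti := innerF_anti
  inner_le := fun r => (innerF_range r).1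
  finite := ⟨B nn β 0, fun r hr => by
    have h0 := (hOB hanti (r := r) (c := 0))
    omega⟩
  entry := entryF nn β F
  entry_zero := fun b hb => by unfold entryF; rw [if_neg hb]
  entry_pos := fun b h1 h2 => by unfold entryF; rw [if_pos ⟨h1, h2⟩]; omega
  row_weak := by
    intro r c c' h1 h2 h3
    have hc : innerF nn β F r ≤ c ∧ c < O nn β r := ⟨h1, by omega⟩
    have hc' : innerF nn β F r ≤ c' ∧ c' < O nn β r := ⟨by omega, h3⟩
    have := filled_col hc
    have := filled_col hc'
    have : c = c' := by omega
    subst this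
    exact le_rfl
  col_strict := by
    intro r r' c hrr h1 h2 h3 h4
    have e1 := (filled_facts hanti hF (r := r) (c := c) ⟨h1, h2⟩).2.2.2.2.2
    have e2 := (filled_facts hanti hF (r := r') (c := c) ⟨h3, h4⟩).2.2.2.2.2
    have f1 := (filled_facts hanti hF (r := r) (c := c) ⟨h1, h2⟩).1
    rw [e1, e2]
    omega
  lattice := by
    intro c e he
    by_cases hne : {b : ℕ × ℕ | innerF nn β F b.1 ≤ b.2 ∧ b.2 < O nn β b.1 ∧ c ≤ b.2 ∧
        entryF nn β F b = e + 1}.Nonempty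
    · obtain ⟨b', hb'⟩ := hne
      obtain ⟨m1, m2, m3, m4⟩ := hb'
      have hfb' : innerF nn β F b'.1 ≤ b'.2 ∧ b'.2 < O nn β b'.1 := ⟨m1, m2⟩
      have hbd := entryF_bounds hanti hF (r := b'.1) (c := b'.2) hfb'
      simp only [Prod.mk.eta] at hbd
      have heT : e + 1 ≤ Tsum nn F 0 := by
        have : Tsum nn F b'.2 ≤ Tsum nn F 0 := Tsum_anti (by omega)
        omega
      obtain ⟨b0, hb0f, hb0e⟩ := entryF_surj hanti hF (v := e) he (by omega)
      have hcol : b'.2 ≤ b0.2 := entryF_colanti hanti hF hb0f hfb' (by omega)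
      have hL : {b : ℕ × ℕ | innerF nn β F b.1 ≤ b.2 ∧ b.2 < O nn β b.1 ∧ c ≤ b.2 ∧
          entryF nn β F b = e + 1} = {b'} := by
        apply Set.eq_singleton_iff_unique_mem.2
        refine ⟨⟨m1, m2, m3, m4⟩, ?_⟩
        rintro x ⟨x1, x2, x3, x4⟩
        exact entryF_inj hanti hF ⟨x1, x2⟩ hfb' (by rw [x4, m4])
      have hR : {b : ℕ × ℕ | innerF nn β F b.1 ≤ b.2 ∧ b.2 < O nn β b.1 ∧ c ≤ b.2 ∧
          entryF nn β F b = e} = {b0} := by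
        apply Set.eq_singleton_iff_unique_mem.2
        refine ⟨⟨hb0f.1, hb0f.2, by omega, hb0e⟩, ?_⟩
        rintro x ⟨x1, x2, x3, x4⟩
        exact entryF_inj hanti hF ⟨x1, x2⟩ hb0f (by rw [x4, hb0e])
      rw [hL, hR, Set.ncard_singleton, Set.ncard_singleton]
    · rw [Set.not_nonempty_iff_eq_empty] at hne
      rw [hne, Set.ncard_empty]
      exact Nat.zero_le _

include hanti in
lemma TabF_le {F : ℕ → ℕ} (hF : ∀ c, F c + B nn β (c + 1) ≤ B nn β c) :
    ∀ b : ℕ × ℕ, (TabF nn β hanti F hF).Mem b → (TabF nn β hanti F hF).entry b ≤ Tsum nn F 0 := by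
  rintro b ⟨h1, h2⟩
  have hbd := entryF_bounds hanti hF (r := b.1) (c := b.2) ⟨h1, h2⟩
  simp only [Prod.mk.eta] at hbd
  have : Tsum nn F b.2 ≤ Tsum nn F 0 := Tsum_anti (by omega)
  show entryF nn β F b ≤ _
  omega

include hanti in
lemma TabF_one {F : ℕ → ℕ} (hF : ∀ c, F c + B nn β (c + 1) ≤ B nn β c) :
    ∀ e : ℕ, 1 ≤ e → e ≤ Tsum nn F 0 →
      Set.ncard {b : ℕ × ℕ | (TabF nn β hanti F hF).Mem b ∧
        (TabF nn β hanti F hF).entry b = e} = 1 := by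
  intro e h1 h2
  obtain ⟨b0, hb0f, hb0e⟩ := entryF_surj hanti hF (v := e) h1 h2
  have : {b : ℕ × ℕ | (TabF nn β hanti F hF).Mem b ∧ (TabF nn β hanti F hF).entry b = e}
      = {b0} := by
    apply Set.eq_singleton_iff_unique_mem.2
    refine ⟨⟨hb0f, hb0e⟩, ?_⟩
    rintro x ⟨hx1, hx2⟩
    have hx1' : innerF nn β F x.1 ≤ x.2 ∧ x.2 < O nn β x.1 := hx1
    have hx2' : entryF nn β F x = e := hx2
    exact entryF_inj hanti hF hx1' hb0f (by rw [hx2', hb0e])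
  rw [this, Set.ncard_singleton]

/-- reading order on boxes: later columns first, then increasing rows -/
def Ord (b b' : ℕ × ℕ) : Prop := b'.2 < b.2 ∨ (b.2 = b'.2 ∧ b.1 < b'.1)

instance (b b' : ℕ × ℕ) : Decidable (Ord b b') := by
  unfold Ord; exact inferInstance

instance (T : LRTableau) : DecidablePred T.Mem := fun b => by
  unfold LRTableau.Mem; exact inferInstance

lemma Ord_trichot (b b' : ℕ × ℕ) : Ord b b' ∨ b = b' ∨ Ord b' b := by
  obtain ⟨r, c⟩ := b
  obtain ⟨r', c'⟩ := b'
  simp only [Ord, Prod.mk.injEq]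
  omega

lemma rank_eq (D : Finset (ℕ × ℕ)) (e : ℕ × ℕ → ℕ) (N : ℕ)
    (h1 : ∀ b ∈ D, 1 ≤ e b ∧ e b ≤ N)
    (h2 : ∀ u, 1 ≤ u → u ≤ N → (D.filter fun b => e b = u).card = 1)
    (h3 : ∀ b ∈ D, ∀ b' ∈ D, (Ord b b' ↔ e b < e b')) :
    ∀ b ∈ D, e b = (D.filter fun b' => Ord b' b).card + 1 := by
  intro b hb
  have hfe : (D.filter fun b' => Ord b' b) = D.filter fun b' => e b' < e b := by
    apply Finset.filter_congr
    intro x hx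
    exact h3 x hx b hb
  rw [hfe]
  have hcard : (D.filter fun b' => e b' < e b).card = e b - 1 := by
    rw [Finset.card_eq_sum_card_fiberwise (f := e) (t := Finset.Ico 1 (e b))
      (fun x hx => by
        simp only [Finset.mem_coe, Finset.mem_filter] at hx
        exact Finset.mem_Ico.2 ⟨(h1 x hx.1).1, hx.2⟩)]
    have hsum : ∀ u ∈ Finset.Ico 1 (e b),
        ((D.filter fun b' => e b' < e b).filter fun x => e x = u).card = 1 := by
      intro u hu
      rw [Finset.mem_Ico] at hu
      have : ((D.filter fun b' => e b' < e b).filter fun x => e x = u) =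
          D.filter fun x => e x = u := by
        rw [Finset.filter_filter]
        apply Finset.filter_congr
        intro x hx
        constructor
        · exact fun h => h.2
        · exact fun h => ⟨by omega, h⟩
      rw [this]
      exact h2 u hu.1 (by have := (h1 b hb).2; omega)
    rw [Finset.sum_congr rfl hsum]
    simp [Nat.card_Ico]
  rw [hcard]
  have := (h1 b hb).1
  omega

section PartI

variable {T : LRTableau} {rmax : ℕ}
variable (houter : ∀ r : ℕ, T.outer r = O nn β r)
variable (hle : ∀ b : ℕ × ℕ, T.Mem b → T.entry b ≤ rmax)
variable (hone : ∀ e : ℕ, 1 ≤ e → e ≤ rmax →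
  Set.ncard {b : ℕ × ℕ | T.Mem b ∧ T.entry b = e} = 1)

include hle hone in
lemma L_unique {b b' : ℕ × ℕ} (hb : T.Mem b) (hb' : T.Mem b')
    (he : T.entry b = T.entry b') : b = b' := by
  have h1 : 1 ≤ T.entry b := T.entry_pos b hb.1 hb.2
  have h2 : T.entry b ≤ rmax := hle b hb
  obtain ⟨a, ha⟩ := Set.ncard_eq_one.1 (hone (T.entry b) h1 h2)
  have m1 : b ∈ {x : ℕ × ℕ | T.Mem x ∧ T.entry x = T.entry b} := ⟨hb, rfl⟩
  have m2 : b' ∈ {x : ℕ × ℕ | T.Mem x ∧ T.entry x = T.entry b} := ⟨hb', he.symm⟩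
  rw [ha] at m1 m2
  rw [Set.mem_singleton_iff] at m1 m2
  rw [m1, m2]

include hone in
lemma L_exists {u : ℕ} (h1 : 1 ≤ u) (h2 : u ≤ rmax) :
    ∃ b : ℕ × ℕ, T.Mem b ∧ T.entry b = u := by
  have := hone u h1 h2
  have hne := Set.nonempty_of_ncard_ne_zero (s := {b : ℕ × ℕ | T.Mem b ∧ T.entry b = u})
    (by omega)
  exact hne

include hle hone in
lemma L_colanti {u : ℕ} (hu : 1 ≤ u) (hur : u + 1 ≤ rmax) {b b' : ℕ × ℕ}
    (hb : T.Mem b) (hb' : T.Mem b') (he : T.entry b = u) (he' : T.entry b' = u + 1) :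
    b'.2 ≤ b.2 := by
  by_contra hc
  have hlat := T.lattice (b.2 + 1) u hu
  have hL : {x : ℕ × ℕ | T.inner x.1 ≤ x.2 ∧ x.2 < T.outer x.1 ∧ b.2 + 1 ≤ x.2 ∧
      T.entry x = u + 1} = {b'} := by
    apply Set.eq_singleton_iff_unique_mem.2
    constructor
    · exact ⟨hb'.1, hb'.2, by omega, he'⟩
    · rintro x ⟨x1, x2, x3, x4⟩
      exact L_unique hle hone ⟨x1, x2⟩ hb' (by rw [x4, he'])
  have hR : {x : ℕ × ℕ | T.inner x.1 ≤ x.2 ∧ x.2 < T.outer x.1 ∧ b.2 + 1 ≤ x.2 ∧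
      T.entry x = u} = ∅ := by
    apply Set.eq_empty_iff_forall_notMem.2
    rintro x ⟨x1, x2, x3, x4⟩
    have hxb : x = b := L_unique hle hone ⟨x1, x2⟩ hb (by rw [x4, he])
    rw [hxb] at x3
    omega
  rw [hL, hR, Set.ncard_singleton, Set.ncard_empty] at hlat
  omega

include hle hone in
lemma L_colanti' {u v : ℕ} (hu : 1 ≤ u) (huv : u ≤ v) (hvr : v ≤ rmax) {b b' : ℕ × ℕ}
    (hb : T.Mem b) (hb' : T.Mem b') (he : T.entry b = u) (he' : T.entry b' = v) :
    b'.2 ≤ b.2 := by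
  induction v, huv using Nat.le_induction generalizing b' with
  | base =>
    rw [L_unique hle hone hb' hb (by rw [he, he'])]
  | succ v hv ih =>
    obtain ⟨bv, hbv, hbve⟩ := L_exists hone (u := v) (by omega) (by omega)
    have h1 : bv.2 ≤ b.2 := ih (by omega) hbv hbve
    have h2 : b'.2 ≤ bv.2 := L_colanti hle hone (by omega) (by omega) hbv hb' hbve he'
    omega

include hle hone in
lemma L_inner_ge (r : ℕ) : T.outer r ≤ T.inner r + 1 := by
  by_contra hc
  have hb1 : T.Mem (r, T.inner r) :=
    ⟨le_rfl, by show T.inner r < T.outer r; omega⟩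
  have hb2 : T.Mem (r, T.inner r + 1) :=
    ⟨by show T.inner r ≤ T.inner r + 1; omega, by show T.inner r + 1 < T.outer r; omega⟩
  have hle12 : T.entry (r, T.inner r) ≤ T.entry (r, T.inner r + 1) :=
    T.row_weak r _ _ le_rfl (by omega) (by omega)
  have hne : T.entry (r, T.inner r) ≠ T.entry (r, T.inner r + 1) := by
    intro h
    have := L_unique hle hone hb1 hb2 h
    simp only [Prod.mk.injEq] at this
    omega
  have h1 : 1 ≤ T.entry (r, T.inner r) := T.entry_pos _ hb1.1 hb1.2
  have h2 : T.entry (r, T.inner r + 1) ≤ rmax := hle _ hb2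
  have hcc := L_colanti' hle hone (u := T.entry (r, T.inner r))
    (v := T.entry (r, T.inner r + 1)) h1 (by omega) h2 hb1 hb2 rfl rfl
  have : T.inner r + 1 ≤ T.inner r := hcc
  omega

include hle hone in
lemma L_colgt {b b' : ℕ × ℕ} (hb : T.Mem b) (hb' : T.Mem b') (hcol : b'.2 < b.2) :
    T.entry b < T.entry b' := by
  by_contra hc2
  have hne : T.entry b ≠ T.entry b' := by
    intro h
    have := L_unique hle hone hb hb' h
    rw [this] at hcol
    omega
  have hlt : T.entry b' < T.entry b := by omega
  have h1 : 1 ≤ T.entry b' := T.entry_pos _ hb'.1 hb'.2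
  have h2 : T.entry b ≤ rmax := hle _ hb
  have := L_colanti' hle hone h1 (by omega) h2 hb' hb rfl rfl
  omega

omit hle hone in
lemma L_samecol {b b' : ℕ × ℕ} (hb : T.Mem b) (hb' : T.Mem b') (hc : b.2 = b'.2)
    (hr : b.1 < b'.1) : T.entry b < T.entry b' := by
  obtain ⟨r, c⟩ := b
  obtain ⟨r', c'⟩ := b'
  have hc2 : c = c' := hc
  have hr2 : r < r' := hr
  subst hc2
  exact T.col_strict r r' c hr2 hb.1 hb.2 hb'.1 hb'.2

include hle hone in
lemma L_ord {b b' : ℕ × ℕ} (hb : T.Mem b) (hb' : T.Mem b') :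
    Ord b b' ↔ T.entry b < T.entry b' := by
  constructor
  · intro ho
    rcases ho with hcol | ⟨hc, hr⟩
    · exact L_colgt hle hone hb hb' hcol
    · exact L_samecol hb hb' hc hr
  · intro hlt
    rcases Ord_trichot b b' with h | h | h
    · exact h
    · rw [h] at hlt; omega
    · exfalso
      rcases h with hcol | ⟨hc, hr⟩
      · have := L_colgt hle hone hb' hb hcol
        omega
      · have := L_samecol hb' hb hc hr
        omega

variable (nn β T) in
/-- the finite set of filled boxes -/
def DD : Finset (ℕ × ℕ) :=
  ((Finset.range (B nn β 0)) ×ˢ (Finset.range nn)).filter fun b => T.Mem b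

include houter hanti in
lemma Mem_DD {b : ℕ × ℕ} : T.Mem b ↔ b ∈ DD nn β T := by
  classical
  constructor
  · intro hb
    have h2 : b.2 < O nn β b.1 := by rw [← houter b.1]; exact hb.2
    have h3 : O nn β b.1 ≤ nn := O_le_nn b.1
    have h4 : 0 < O nn β b.1 := by omega
    have h5 : b.1 < B nn β 0 := (hOB hanti).1 h4
    unfold DD
    rw [Finset.mem_filter, Finset.mem_product, Finset.mem_range, Finset.mem_range]
    exact ⟨⟨h5, by omega⟩, hb⟩
  · intro hb
    unfold DD at hb
    rw [Finset.mem_filter] at hb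
    exact hb.2

include hanti houter hle hone in
lemma L_rank {b : ℕ × ℕ} (hb : T.Mem b) :
    T.entry b = ((DD nn β T).filter fun b' => Ord b' b).card + 1 := by
  classical
  apply rank_eq (DD nn β T) T.entry rmax
  · intro x hx
    have hm : T.Mem x := (Mem_DD hanti houter).2 hx
    exact ⟨T.entry_pos x hm.1 hm.2, hle x hm⟩
  · intro u h1 h2
    obtain ⟨a, ha⟩ := Set.ncard_eq_one.1 (hone u h1 h2)
    have haa : T.Mem a ∧ T.entry a = u := by
      have : a ∈ {x : ℕ × ℕ | T.Mem x ∧ T.entry x = u} := by rw [ha]; rfl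
      exact this
    have : ((DD nn β T).filter fun x => T.entry x = u) = {a} := by
      apply Finset.eq_singleton_iff_unique_mem.2
      constructor
      · rw [Finset.mem_filter]
        exact ⟨(Mem_DD hanti houter).1 haa.1, haa.2⟩
      · intro x hx
        rw [Finset.mem_filter] at hx
        have : x ∈ {y : ℕ × ℕ | T.Mem y ∧ T.entry y = u} :=
          ⟨(Mem_DD hanti houter).2 hx.1, hx.2⟩
        rw [ha] at this
        exact this
    rw [this]
    exact Finset.card_singleton a
  · intro x hx y hy
    exact L_ord hle hone ((Mem_DD hanti houter).2 hx) ((Mem_DD hanti houter).2 hy)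
  · exact (Mem_DD hanti houter).1 hb

end PartI

lemma LRTableau.ext' {T U : LRTableau} (h1 : T.outer = U.outer) (h2 : T.inner = U.inner)
    (h3 : T.entry = U.entry) : T = U := by
  cases T
  cases U
  dsimp only at h1 h2 h3
  subst h1
  subst h2
  subst h3
  rfl

include hanti in
lemma TabF_congr {F F' : ℕ → ℕ} (hF : ∀ c, F c + B nn β (c + 1) ≤ B nn β c)
    (hF' : ∀ c, F' c + B nn β (c + 1) ≤ B nn β c) (h : F = F') :
    TabF nn β hanti F hF = TabF nn β hanti F' hF' := by
  subst h
  rfl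

variable (nn β) in
/-- number of filled boxes of `T` in column `c` -/
def FT (T : LRTableau) (c : ℕ) : ℕ :=
  ((Finset.Ico (B nn β (c + 1)) (B nn β c)).filter fun r => T.inner r ≤ c).card

include hanti in
lemma hFT (T : LRTableau) : ∀ c, FT nn β T c + B nn β (c + 1) ≤ B nn β c := by
  intro c
  have h1 : FT nn β T c ≤ B nn β c - B nn β (c + 1) := by
    unfold FT
    calc _ ≤ (Finset.Ico (B nn β (c + 1)) (B nn β c)).card := Finset.card_filter_le _ _
    _ = _ := Nat.card_Ico _ _
  have h2 : B nn β (c + 1) ≤ B nn β c := B_anti hanti (by omega)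
  omega

section Classify

variable {T : LRTableau} {rmax : ℕ}
variable (houter : ∀ r : ℕ, T.outer r = O nn β r)
variable (hle : ∀ b : ℕ × ℕ, T.Mem b → T.entry b ≤ rmax)
variable (hone : ∀ e : ℕ, 1 ≤ e → e ≤ rmax →
  Set.ncard {b : ℕ × ℕ | T.Mem b ∧ T.entry b = e} = 1)

include hanti houter hle hone in
lemma inner_key {r c : ℕ} (hc1 : B nn β (c + 1) ≤ r) (hc2 : r < B nn β c) :
    T.inner r = c ↔ B nn β c - FT nn β T c ≤ r := by
  have hcO : c < O nn β r := (hOB hanti).2 hc2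
  have hcO1 : ¬ (c + 1 < O nn β r) := fun hq => by
    have := (hOB hanti).1 hq
    omega
  have hOr : O nn β r = c + 1 := by omega
  have hrange : c ≤ T.inner r ∧ T.inner r ≤ c + 1 := by
    have hl := T.inner_le r
    have hg := L_inner_ge hle hone r
    rw [houter r, hOr] at hl hg
    omega
  constructor
  · intro h
    have hsub : Finset.Ico r (B nn β c) ⊆
        (Finset.Ico (B nn β (c + 1)) (B nn β c)).filter fun x => T.inner x ≤ c := by
      intro x hx
      rw [Finset.mem_Ico] at hx
      rw [Finset.mem_filter, Finset.mem_Ico]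
      refine ⟨⟨by omega, hx.2⟩, ?_⟩
      have := T.inner_anti hx.1
      omega
    have := Finset.card_le_card hsub
    rw [Nat.card_Ico] at this
    unfold FT
    omega
  · intro h
    by_contra hne
    have hin : T.inner r = c + 1 := by omega
    have hsub : ((Finset.Ico (B nn β (c + 1)) (B nn β c)).filter fun x => T.inner x ≤ c)
        ⊆ Finset.Ico (r + 1) (B nn β c) := by
      intro x hx
      rw [Finset.mem_filter, Finset.mem_Ico] at hx
      rw [Finset.mem_Ico]
      refine ⟨?_, hx.1.2⟩
      by_contra hxr
      have : T.inner r ≤ T.inner x := T.inner_anti (by omega)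
      omega
    have := Finset.card_le_card hsub
    rw [Nat.card_Ico] at this
    unfold FT at h
    omega

include hanti houter hle hone in
lemma h_inner : T.inner = innerF nn β (FT nn β T) := by
  funext r
  by_cases h0 : O nn β r = 0
  · have h1 : T.inner r = 0 := by
      have := T.inner_le r
      rw [houter r, h0] at this
      omega
    have h2 : innerF nn β (FT nn β T) r = 0 := by
      unfold innerF
      rw [if_neg (by omega), h0]
    rw [h1, h2]
  · set c := O nn β r - 1 with hc
    have hOr : O nn β r = c + 1 := by omega
    have hc2 : r < B nn β c := (hOB hanti).1 (by omega)
    have hc1 : B nn β (c + 1) ≤ r := by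
      by_contra hq
      have := (hOB hanti).2 (show r < B nn β (c + 1) by omega)
      omega
    have hkey := inner_key hanti houter hle hone hc1 hc2
    have hrange : c ≤ T.inner r ∧ T.inner r ≤ c + 1 := by
      have hl := T.inner_le r
      have hg := L_inner_ge hle hone r
      rw [houter r, hOr] at hl hg
      omega
    have hiF : innerF nn β (FT nn β T) r =
        if B nn β c - FT nn β T c ≤ r then c else c + 1 := by
      unfold innerF
      rw [hOr]
      simp only [Nat.add_sub_cancel]
      split_ifs with q1 q2 q3
      · rfl
      · exact absurd q1.2 q2
      · exact absurd ⟨Nat.succ_pos c, q3⟩ q1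
      · rfl
    rw [hiF]
    split_ifs with q
    · exact hkey.2 q
    · omega

include hanti houter hle hone in
lemma h_entry : T.entry = entryF nn β (FT nn β T) := by
  have hin := h_inner hanti houter hle hone
  have hout : T.outer = O nn β := funext houter
  set T' := TabF nn β hanti (FT nn β T) (hFT hanti T) with hT'
  have hmemiff : ∀ b : ℕ × ℕ, T.Mem b ↔ T'.Mem b := by
    intro b
    unfold LRTableau.Mem
    rw [hT']
    show _ ↔ innerF nn β (FT nn β T) b.1 ≤ b.2 ∧ b.2 < O nn β b.1
    rw [← hin, ← hout]
  have hDD : DD nn β T = DD nn β T' := by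
    unfold DD
    apply Finset.filter_congr
    intro x _
    exact hmemiff x
  funext b
  by_cases hm : T.Mem b
  · have hm' : T'.Mem b := (hmemiff b).1 hm
    have r1 := L_rank hanti houter hle hone hm
    have r2 := L_rank hanti (T := T') (rmax := Tsum nn (FT nn β T) 0)
      (fun r => rfl) (TabF_le hanti (hFT hanti T)) (TabF_one hanti (hFT hanti T)) hm'
    have : T'.entry b = entryF nn β (FT nn β T) b := rfl
    rw [← this, r1, r2, hDD]
  · have hz1 : T.entry b = 0 := T.entry_zero b hm
    have hz2 : T'.entry b = 0 := T'.entry_zero b (fun hq => hm ((hmemiff b).2 hq))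
    rw [hz1]
    exact hz2.symm

include hanti houter hle hone in
lemma classify : T = TabF nn β hanti (FT nn β T) (hFT hanti T) := by
  apply LRTableau.ext'
  · exact funext houter
  · exact h_inner hanti houter hle hone
  · exact h_entry hanti houter hle hone

end Classify

variable (nn β) in
def Ff (f : ∀ i : Fin nn, Fin (1 + β i - B nn β ((i : ℕ) + 1))) (c : ℕ) : ℕ :=
  if h : c < nn then (f ⟨c, h⟩ : ℕ) else 0

include hanti in
lemma hFf (f : ∀ i : Fin nn, Fin (1 + β i - B nn β ((i : ℕ) + 1))) :
    ∀ c, Ff nn β f c + B nn β (c + 1) ≤ B nn β c := by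
  intro c
  unfold Ff
  by_cases h : c < nn
  · rw [dif_pos h]
    have h1 : ((f ⟨c, h⟩ : ℕ)) < 1 + β ⟨c, h⟩ - B nn β (c + 1) := (f ⟨c, h⟩).isLt
    have h2 : B nn β (c + 1) ≤ B nn β c := B_anti hanti (by omega)
    have h3 : B nn β c = β ⟨c, h⟩ := by unfold B; rw [dif_pos h]
    omega
  · rw [dif_neg h]
    have h2 : B nn β c = 0 := by unfold B; rw [dif_neg h]
    have h3 : B nn β (c + 1) = 0 := by unfold B; rw [dif_neg (by omega)]
    omega

variable (nn β) in
def gmap (hanti : ∀ i j : Fin nn, i ≤ j → β j ≤ β i)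
    (f : ∀ i : Fin nn, Fin (1 + β i - B nn β ((i : ℕ) + 1))) : LRTableau :=
  TabF nn β hanti (Ff nn β f) (hFf hanti f)

include hanti in
lemma inj_aux {F F' : ℕ → ℕ} (hF : ∀ c, F c + B nn β (c + 1) ≤ B nn β c)
    (hF' : ∀ c, F' c + B nn β (c + 1) ≤ B nn β c)
    (hi : innerF nn β F = innerF nn β F') {c : ℕ} (hlt : F c < F' c) : False := by
  set r := B nn β c - F' c with hr
  have hF'B : F' c + B nn β (c + 1) ≤ B nn β c := hF' c
  have h1 : B nn β (c + 1) ≤ r := by omega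
  have h2 : r < B nn β c := by omega
  have h3 : B nn β c - F' c ≤ r := by omega
  have hfill' := (filled_iff hanti hF' (r := r) (c := c)).2 ⟨h3, h2⟩
  have hcol := filled_col (F := F') (r := r) (c := c) hfill'
  have hrng' := innerF_range (β := β) (F := F') r
  have hval' : innerF nn β F' r = c := by omega
  have hnfill : ¬ (innerF nn β F r ≤ c ∧ c < O nn β r) := by
    intro hq
    have := (filled_iff hanti hF).1 hq
    omega
  have hcO : c < O nn β r := (hOB hanti).2 h2
  have hrng : innerF nn β F r ≤ O nn β r := (innerF_range r).1
  have hval : c + 1 ≤ innerF nn β F r := by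
    by_contra hq
    exact hnfill ⟨by omega, hcO⟩
  have := congrFun hi r
  omega

include hanti in
lemma gmap_inj : Function.Injective (gmap nn β hanti) := by
  intro f f' h
  have hi : innerF nn β (Ff nn β f) = innerF nn β (Ff nn β f') :=
    congrArg LRTableau.inner h
  have hFF : Ff nn β f = Ff nn β f' := by
    funext c
    by_contra hne
    rcases Nat.lt_or_ge (Ff nn β f c) (Ff nn β f' c) with hlt | hge
    · exact inj_aux hanti (hFf hanti f) (hFf hanti f') hi hlt
    · exact inj_aux hanti (hFf hanti f') (hFf hanti f) hi.symm (c := c) (by omega)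
  funext i
  have hv := congrFun hFF (i : ℕ)
  unfold Ff at hv
  rw [dif_pos i.isLt, dif_pos i.isLt] at hv
  exact Fin.ext hv

include hanti in
lemma range_eq :
    {T : LRTableau |
        (∀ r : ℕ, T.outer r = (Finset.univ.filter fun i : Fin nn => r < β i).card) ∧
        ∃ rmax : ℕ, (∀ b : ℕ × ℕ, T.Mem b → T.entry b ≤ rmax) ∧
          ∀ e : ℕ, 1 ≤ e → e ≤ rmax →
            Set.ncard {b : ℕ × ℕ | T.Mem b ∧ T.entry b = e} = 1}
      = Set.range (gmap nn β hanti) := by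
  ext T
  simp only [Set.mem_setOf_eq, Set.mem_range]
  constructor
  · rintro ⟨houter, rmax, hle, hone⟩
    have houter' : ∀ r, T.outer r = O nn β r := houter
    have hcls := classify hanti houter' hle hone
    refine ⟨fun i => ⟨FT nn β T (i : ℕ), by
      have h1 := hFT hanti T (i : ℕ)
      have h2 : B nn β (i : ℕ) = β i := by unfold B; rw [dif_pos i.isLt]
      have h3 : B nn β ((i : ℕ) + 1) ≤ B nn β (i : ℕ) := B_anti hanti (by omega)
      omega⟩, ?_⟩
    have hFF : Ff nn β (fun i => (⟨FT nn β T (i : ℕ), by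
        have h1 := hFT hanti T (i : ℕ)
        have h2 : B nn β (i : ℕ) = β i := by unfold B; rw [dif_pos i.isLt]
        have h3 : B nn β ((i : ℕ) + 1) ≤ B nn β (i : ℕ) := B_anti hanti (by omega)
        omega⟩ : Fin (1 + β i - B nn β ((i : ℕ) + 1)))) = FT nn β T := by
      funext c
      unfold Ff
      by_cases h : c < nn
      · rw [dif_pos h]
      · rw [dif_neg h]
        unfold FT
        have h2 : B nn β c = 0 := by unfold B; rw [dif_neg h]
        rw [h2]
        simp
    unfold gmap
    conv_rhs => rw [hcls]
    exact TabF_congr hanti _ _ hFF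
  · rintro ⟨f, rfl⟩
    exact ⟨fun r => rfl, Tsum nn (Ff nn β f) 0, TabF_le hanti (hFf hanti f),
      TabF_one hanti (hFf hanti f)⟩

include hanti in
lemma count : Set.ncard (Set.range (gmap nn β hanti)) =
    ∏ i : Fin nn, (1 + β i - B nn β ((i : ℕ) + 1)) := by
  rw [← Set.image_univ, Set.ncard_image_of_injective _ (gmap_inj hanti), Set.ncard_univ,
    Nat.card_eq_fintype_card, Fintype.card_pi]
  simp [Fintype.card_fin]

end LR15

/-- The number of LR-tableaux with outer shape `β` (a partition with positive
parts `β 0 ≥ β 1 ≥ ⋯`, the parts being drawn as the column heights of the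
diagram, so that the `r`-th row of the diagram has length `#{i | β i > r}`)
in which every entry occurs exactly once equals `∏ i (1 + β i − β (i+1))`
(with `β (i+1) = 0` past the end). -/
theorem stmt15 (nn : ℕ) (β : Fin nn → ℕ)
    (hanti : ∀ i j : Fin nn, i ≤ j → β j ≤ β i) (hpos : ∀ i, 0 < β i) :
    Set.ncard {T : LRTableau |
        (∀ r : ℕ, T.outer r = (Finset.univ.filter fun i : Fin nn => r < β i).card) ∧
        ∃ rmax : ℕ, (∀ b : ℕ × ℕ, T.Mem b → T.entry b ≤ rmax) ∧
          ∀ e : ℕ, 1 ≤ e → e ≤ rmax →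
            Set.ncard {b : ℕ × ℕ | T.Mem b ∧ T.entry b = e} = 1} =
      ∏ i : Fin nn,
        (1 + β i - (if h : (i : ℕ) + 1 < nn then β ⟨(i : ℕ) + 1, h⟩ else 0)) := by
  rw [LR15.range_eq hanti, LR15.count hanti]
  rfl
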